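/- For every d ∈ (0,1) and every integer k ≥ 1, the WENO-PM_k mapping function is k times differentiable at ω = d with g⁽ʲ⁾(d) = 0 for all 1 ≤ j ≤ k (the one-sided derivatives of orders 1 through k of both branches vanish at d); moreover the one-sided derivatives at the endpoints satisfy g′(0) = 0 and g′(1) = 0. -/

import Mathlib

/-- The left branch (ω ≤ d) of the WENO-PMₖ mapping function. -/
noncomputable def gPML (d : ℝ) (k : ℕ) (ω : ℝ) : ℝ :=
  ((-1 : ℝ) ^ k * ((k : ℝ) + 1) / d ^ (k + 1)) * (ω - d) ^ (k + 1) * (ω + d / ((k : ℝ) + 1)) + d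

/-- The right branch (ω > d) of the WENO-PMₖ mapping function. -/
noncomputable def gPMR (d : ℝ) (k : ℕ) (ω : ℝ) : ℝ :=
  (-((k : ℝ) + 1) / (1 - d) ^ (k + 1)) * (ω - d) ^ (k + 1) *
    (ω + (d - ((k : ℝ) + 2)) / ((k : ℝ) + 1)) + d

/-- The WENO-PMₖ mapping function. -/
noncomputable def gPM (d : ℝ) (k : ℕ) (ω : ℝ) : ℝ :=
  if ω ≤ d then gPML d k ω else gPMR d k ω


open Set Filter Topology Asymptotics

/-- auxiliary: positive-part power -/
noncomputable def mpow (m : ℕ) (x : ℝ) : ℝ := max x 0 ^ m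

lemma hasDerivAt_mpow (m : ℕ) (hm : 1 ≤ m) (x : ℝ) :
    HasDerivAt (mpow (m + 1)) (((m : ℝ) + 1) * mpow m x) x := by
  rcases lt_trichotomy x 0 with hx | hx | hx
  · have hev : (fun _ : ℝ => (0 : ℝ)) =ᶠ[𝓝 x] mpow (m + 1) := by
      filter_upwards [Iio_mem_nhds hx] with y hy
      rw [Set.mem_Iio] at hy
      simp [mpow, max_eq_right hy.le, zero_pow (by omega : m + 1 ≠ 0)]
    have h0 : HasDerivAt (fun _ : ℝ => (0 : ℝ)) 0 x := hasDerivAt_const x 0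
    have := h0.congr_of_eventuallyEq hev.symm
    refine this.congr_deriv ?_
    simp [mpow, max_eq_right hx.le, zero_pow (by omega : m ≠ 0)]
  · subst hx
    have hval : mpow m 0 = 0 := by
      simp [mpow, zero_pow (by omega : m ≠ 0)]
    rw [hval, mul_zero, hasDerivAt_iff_isLittleO]
    have hO : (fun y : ℝ => mpow (m + 1) y - mpow (m + 1) 0 - (y - 0) • (0 : ℝ))
        =O[𝓝 0] fun y : ℝ => y ^ (m + 1) := by
      apply IsBigO.of_bound 1
      filter_upwards with y
      have h1 : |max y 0| ≤ |y| := by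
        rcases le_or_gt y 0 with h | h
        · simp [max_eq_right h]
        · simp [max_eq_left h.le]
      simp only [mpow, sub_zero, smul_zero, one_mul, max_self,
        zero_pow (by omega : m + 1 ≠ 0), Real.norm_eq_abs, abs_pow]
      exact pow_le_pow_left₀ (abs_nonneg _) h1 (m + 1)
    have hlo : (fun y : ℝ => y ^ (m + 1)) =o[𝓝 0] fun y : ℝ => y :=
      isLittleO_pow_id (by omega)
    have := hO.trans_isLittleO hlo
    simpa using this
  · have hev : (fun y : ℝ => y ^ (m + 1)) =ᶠ[𝓝 x] mpow (m + 1) := by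
      filter_upwards [Ioi_mem_nhds hx] with y hy
      simp [mpow, max_eq_left (le_of_lt (Set.mem_Ioi.mp hy))]
    have h0 : HasDerivAt (fun y : ℝ => y ^ (m + 1)) (((m : ℝ) + 1) * x ^ m) x := by
      simpa using hasDerivAt_pow (m + 1) x
    have := h0.congr_of_eventuallyEq hev.symm
    refine this.congr_deriv ?_
    simp [mpow, max_eq_left hx.le]

lemma contDiff_mpow : ∀ m : ℕ, ContDiff ℝ m (mpow (m + 1)) := by
  intro m
  induction m with
  | zero =>
    rw [show ((0 : ℕ) : WithTop ℕ∞) = 0 from rfl, contDiff_zero]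
    have : Continuous fun x : ℝ => max x 0 ^ (0 + 1) := by fun_prop
    exact this
  | succ m ih =>
    rw [show ((m + 1 : ℕ) : WithTop ℕ∞) = (m : WithTop ℕ∞) + 1 by push_cast; ring,
      contDiff_succ_iff_deriv]
    refine ⟨fun x => (hasDerivAt_mpow (m + 1) (by omega) x).differentiableAt, ?_, ?_⟩
    · intro h; simp at h
    · have hder : deriv (mpow (m + 2)) = fun x => ((m : ℝ) + 2) * mpow (m + 1) x := by
        funext x
        have := (hasDerivAt_mpow (m + 1) (by omega) x).deriv
        rw [this]; push_cast; ring
      rw [hder]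
      exact contDiff_const.mul ih

lemma iteratedDeriv_zero_left {f : ℝ → ℝ} {k : ℕ} (hf : ContDiff ℝ k f) {d : ℝ}
    (h0 : ∀ x ≤ d, f x = 0) : ∀ j, j ≤ k → ∀ x ≤ d, iteratedDeriv j f x = 0 := by
  intro j
  induction j with
  | zero => intro _ x hx; simpa using h0 x hx
  | succ j ih =>
    intro hj x hx
    have hdiff : Differentiable ℝ (iteratedDeriv j f) :=
      hf.differentiable_iteratedDeriv j (by exact_mod_cast Nat.lt_of_succ_le hj)
    rw [iteratedDeriv_succ]
    have h1 : HasDerivWithinAt (iteratedDeriv j f) (deriv (iteratedDeriv j f) x) (Iic d) x :=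
      (hdiff x).hasDerivAt.hasDerivWithinAt
    have h2 : HasDerivWithinAt (iteratedDeriv j f) 0 (Iic d) x := by
      refine ((hasDerivAt_const x (0 : ℝ)).hasDerivWithinAt).congr ?_ ?_
      · intro y hy; exact ih (by omega) y hy
      · exact ih (by omega) x hx
    have hu : UniqueDiffWithinAt ℝ (Iic d) x := uniqueDiffOn_Iic d x hx
    have e1 := h1.derivWithin hu
    have e2 := h2.derivWithin hu
    rw [← e1, e2]

lemma iter_comb (A B c d : ℝ) (k : ℕ) : ∀ j : ℕ,
    iteratedDeriv j (fun x : ℝ => A * (x - d) ^ (k + 2) + B * (x - d) ^ (k + 1) + c) =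
      fun x => A * ((k + 2).descFactorial j : ℝ) * (x - d) ^ (k + 2 - j) +
        B * ((k + 1).descFactorial j : ℝ) * (x - d) ^ (k + 1 - j) +
        (if j = 0 then c else 0) := by
  intro j
  induction j with
  | zero => funext x; simp
  | succ j ih =>
    rw [iteratedDeriv_succ, ih]
    funext x
    have h : HasDerivAt
        (fun x : ℝ => A * ((k + 2).descFactorial j : ℝ) * (x - d) ^ (k + 2 - j) +
          B * ((k + 1).descFactorial j : ℝ) * (x - d) ^ (k + 1 - j) +
          (if j = 0 then c else 0))
        (A * ((k + 2).descFactorial j : ℝ) * (((k + 2 - j : ℕ) : ℝ) * (x - d) ^ (k + 2 - j - 1) * 1) +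
          B * ((k + 1).descFactorial j : ℝ) * (((k + 1 - j : ℕ) : ℝ) * (x - d) ^ (k + 1 - j - 1) * 1)) x := by
      exact (((((hasDerivAt_id x).sub_const d).pow (k + 2 - j)).const_mul _).add
        ((((hasDerivAt_id x).sub_const d).pow (k + 1 - j)).const_mul _)).add_const _
    rw [h.deriv]
    have e1 : k + 2 - (j + 1) = k + 2 - j - 1 := by omega
    have e2 : k + 1 - (j + 1) = k + 1 - j - 1 := by omega
    rw [e1, e2, Nat.descFactorial_succ, Nat.descFactorial_succ]
    push_cast [Nat.cast_mul]
    ring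

lemma iter_pow_sub (d : ℝ) (m j : ℕ) : iteratedDeriv j (fun x : ℝ => (x - d) ^ m) =
    fun x => (m.descFactorial j : ℝ) * (x - d) ^ (m - j) := by
  induction j with
  | zero => funext x; simp
  | succ j ih =>
    rw [iteratedDeriv_succ, ih]
    funext x
    have h : HasDerivAt (fun x : ℝ => (m.descFactorial j : ℝ) * (x - d) ^ (m - j))
        ((m.descFactorial j : ℝ) * (((m - j : ℕ) : ℝ) * (x - d) ^ (m - j - 1) * 1)) x :=
      (((hasDerivAt_id x).sub_const d).pow (m - j)).const_mul _
    rw [h.deriv, Nat.descFactorial_succ]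
    have e1 : m - (j + 1) = m - j - 1 := by omega
    rw [e1]
    push_cast [Nat.cast_mul]
    ring

/-- For every `d ∈ (0,1)` and integer `k ≥ 1`, the WENO-PMₖ mapping is `k` times
differentiable at `ω = d` with `g⁽ʲ⁾(d) = 0` for `1 ≤ j ≤ k` (the one-sided derivatives
of orders `1` through `k` of both branches vanish at `d`); moreover the one-sided
derivatives at the endpoints satisfy `g′(0) = 0` and `g′(1) = 0`. -/
theorem wenoPM_derivatives (d : ℝ) (hd : d ∈ Set.Ioo (0 : ℝ) 1) (k : ℕ) (hk : 1 ≤ k) :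
    ContDiffAt ℝ k (gPM d k) d ∧
    (∀ j : ℕ, 1 ≤ j → j ≤ k →
      iteratedDeriv j (gPM d k) d = 0 ∧
      iteratedDeriv j (gPML d k) d = 0 ∧ iteratedDeriv j (gPMR d k) d = 0) ∧
    deriv (gPML d k) 0 = 0 ∧ deriv (gPMR d k) 1 = 0 := by
  obtain ⟨hd0, hd1⟩ := hd
  have hk1 : ((k : ℝ) + 1) ≠ 0 := by positivity
  set C1 : ℝ := (-1 : ℝ) ^ k * ((k : ℝ) + 1) / d ^ (k + 1) with hC1
  set C2 : ℝ := -((k : ℝ) + 1) / (1 - d) ^ (k + 1) with hC2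
  set E1 : ℝ := d / ((k : ℝ) + 1) with hE1
  set E2 : ℝ := (d - ((k : ℝ) + 2)) / ((k : ℝ) + 1) with hE2
  set q : ℝ → ℝ := fun x => mpow (k + 1) (x - d) * (C1 * (x + E1) - C2 * (x + E2)) with hq
  -- basic smoothness
  have hML_cd : ContDiff ℝ k (gPML d k) := by
    unfold gPML; fun_prop
  have hMR_cd : ContDiff ℝ k (gPMR d k) := by
    unfold gPMR; fun_prop
  have hq_cd : ContDiff ℝ k q := by
    refine ContDiff.mul ?_ (by fun_prop)
    exact (contDiff_mpow k).comp (contDiff_id.sub contDiff_const)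
  have hq0 : ∀ x ≤ d, q x = 0 := by
    intro x hx
    have : max (x - d) 0 = 0 := max_eq_right (by linarith)
    simp [hq, mpow, this, zero_pow (by omega : k + 1 ≠ 0)]
  have hsplit : gPM d k = fun x => gPML d k x - q x := by
    funext x
    unfold gPM
    by_cases hx : x ≤ d
    · rw [if_pos hx, hq0 x hx, sub_zero]
    · rw [if_neg hx]
      push_neg at hx
      have hmax : max (x - d) 0 = x - d := max_eq_left (by linarith)
      simp only [hq, mpow, hmax]
      unfold gPML gPMR
      ring
  have hPM_cd : ContDiff ℝ k (gPM d k) := by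
    rw [hsplit]; exact hML_cd.sub hq_cd
  refine ⟨hPM_cd.contDiffAt, ?_, ?_, ?_⟩
  · intro j hj1 hjk
    have hML_dec : gPML d k = fun x : ℝ =>
        C1 * (x - d) ^ (k + 2) + (C1 * (d + E1)) * (x - d) ^ (k + 1) + d := by
      funext x; unfold gPML; rw [← hC1, ← hE1]; ring
    have hMR_dec : gPMR d k = fun x : ℝ =>
        C2 * (x - d) ^ (k + 2) + (C2 * (d + E2)) * (x - d) ^ (k + 1) + d := by
      funext x; unfold gPMR; rw [← hC2, ← hE2]; ring
    have h1 : k + 2 - j ≠ 0 := by omega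
    have h2 : k + 1 - j ≠ 0 := by omega
    have hML0 : iteratedDeriv j (gPML d k) d = 0 := by
      rw [hML_dec, iter_comb]
      simp [zero_pow h1, zero_pow h2]
      exact fun h => absurd h (by omega)
    have hMR0 : iteratedDeriv j (gPMR d k) d = 0 := by
      rw [hMR_dec, iter_comb]
      simp [zero_pow h1, zero_pow h2]
      exact fun h => absurd h (by omega)
    have hq_it : iteratedDeriv j q d = 0 :=
      iteratedDeriv_zero_left hq_cd hq0 j hjk d le_rfl
    have hPM0 : iteratedDeriv j (gPM d k) d = 0 := by
      rw [hsplit]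
      show iteratedDeriv j (gPML d k - q) d = 0
      rw [← iteratedDerivWithin_univ,
        iteratedDerivWithin_sub (Set.mem_univ d) uniqueDiffOn_univ
          ((hML_cd.of_le (by exact_mod_cast hjk)).contDiffAt.contDiffWithinAt)
          ((hq_cd.of_le (by exact_mod_cast hjk)).contDiffAt.contDiffWithinAt),
        iteratedDerivWithin_univ, iteratedDerivWithin_univ, hML0, hq_it, sub_zero]
    exact ⟨hPM0, hML0, hMR0⟩
  · -- deriv gPML at 0
    have h4 : HasDerivAt (gPML d k)
        (C1 * ((((k : ℝ) + 1)) * ((0 : ℝ) - d) ^ k * 1) * ((0 : ℝ) + E1)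
          + C1 * ((0 : ℝ) - d) ^ (k + 1) * 1) 0 := by
      unfold gPML
      rw [← hC1, ← hE1]
      have h1 : HasDerivAt (fun ω : ℝ => (ω - d) ^ (k + 1))
          ((((k : ℕ) + 1 : ℕ) : ℝ) * ((0 : ℝ) - d) ^ (k + 1 - 1) * 1) 0 :=
        ((hasDerivAt_id 0).sub_const d).pow (k + 1)
      rw [Nat.add_sub_cancel] at h1
      push_cast at h1
      have h2 : HasDerivAt (fun ω : ℝ => ω + E1) 1 (0 : ℝ) := (hasDerivAt_id 0).add_const E1
      have h3 := (h1.const_mul C1).mul h2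
      have h4 := h3.add_const d
      exact h4
    rw [h4.deriv]
    rw [hC1, hE1]
    have hdne : d ^ (k + 1) ≠ 0 := pow_ne_zero _ hd0.ne'
    field_simp
    ring
  · -- deriv gPMR at 1
    have h4 : HasDerivAt (gPMR d k)
        (C2 * ((((k : ℝ) + 1)) * ((1 : ℝ) - d) ^ k * 1) * ((1 : ℝ) + E2)
          + C2 * ((1 : ℝ) - d) ^ (k + 1) * 1) 1 := by
      unfold gPMR
      rw [← hC2, ← hE2]
      have h1 : HasDerivAt (fun ω : ℝ => (ω - d) ^ (k + 1))
          ((((k : ℕ) + 1 : ℕ) : ℝ) * ((1 : ℝ) - d) ^ (k + 1 - 1) * 1) 1 :=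
        ((hasDerivAt_id 1).sub_const d).pow (k + 1)
      rw [Nat.add_sub_cancel] at h1
      push_cast at h1
      have h2 : HasDerivAt (fun ω : ℝ => ω + E2) 1 (1 : ℝ) := (hasDerivAt_id 1).add_const E2
      have h3 := (h1.const_mul C2).mul h2
      have h4 := h3.add_const d
      exact h4
    rw [h4.deriv]
    rw [hC2, hE2]
    have hdne : (1 - d) ^ (k + 1) ≠ 0 := pow_ne_zero _ (by linarith)
    field_simp
    ring
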